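/- Let G be a minimum counterexample to the statement 'every planar graph with maximum degree at most 6 has 2-distance chromatic number at most 20'. Then the minimum degree of G satisfies δ(G) ≥ 3. -/

import Mathlib

open Set

noncomputable section

namespace TwoDistance

/-- The degree of a vertex `v` in a graph `G`. -/
def vdeg {V : Type} (G : SimpleGraph V) (v : V) : ℕ := {w | G.Adj v w}.ncard

/-- The maximum degree `Δ(G)` of a graph `G`. -/
def maxDeg {V : Type} (G : SimpleGraph V) : ℕ := sSup (Set.range (vdeg G))

/-- The minimum degree `δ(G)` of a graph `G`. -/
def minDeg {V : Type} (G : SimpleGraph V) : ℕ := sInf (Set.range (vdeg G))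

/-- `n_k(v)`: the number of neighbours of `v` of degree `k`. -/
def nDeg {V : Type} (G : SimpleGraph V) (k : ℕ) (v : V) : ℕ :=
  {w | G.Adj v w ∧ vdeg G w = k}.ncard

/-- `n_{k⁻}(v)`: the number of neighbours of `v` of degree at most `k`. -/
def nDegLe {V : Type} (G : SimpleGraph V) (k : ℕ) (v : V) : ℕ :=
  {w | G.Adj v w ∧ vdeg G w ≤ k}.ncard

/-- A 2-distance `k`-coloring of `G`: distinct vertices at distance at most 2
(i.e. joined by a walk of length at most 2) get different colors. -/
def IsTwoDistColoring {V : Type} (G : SimpleGraph V) {k : ℕ} (φ : V → Fin k) : Prop :=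
  ∀ u v : V, u ≠ v → (∃ p : G.Walk u v, p.length ≤ 2) → φ u ≠ φ v

/-- The 2-distance chromatic number `χ₂(G)`. -/
def chi2 {V : Type} (G : SimpleGraph V) : ℕ :=
  sInf {k : ℕ | ∃ φ : V → Fin k, IsTwoDistColoring G φ}

/-- A (topological) embedding of a simple graph in the plane: vertices are mapped to
distinct points, edges to arcs between the endpoints, such that arcs are injective,
pass through no vertex point other than their endpoints, and two arcs of distinct
edges meet only in vertex points (hence only in common endpoints). -/
structure PlaneEmbedding {V : Type} (G : SimpleGraph V) where
  pos : V → ℝ × ℝ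
  pos_inj : Function.Injective pos
  arc : ∀ u v : V, G.Adj u v → Path (pos u) (pos v)
  arc_symm : ∀ (u v : V) (h : G.Adj u v), arc v u h.symm = (arc u v h).symm
  arc_inj : ∀ (u v : V) (h : G.Adj u v), Function.Injective (arc u v h)
  arc_vertex : ∀ (u v : V) (h : G.Adj u v) (t : unitInterval) (w : V),
      arc u v h t = pos w → w = u ∨ w = v
  arc_meet : ∀ (u v u' v' : V) (h : G.Adj u v) (h' : G.Adj u' v')
      (t t' : unitInterval), s(u, v) ≠ s(u', v') →
      arc u v h t = arc u' v' h' t' → ∃ w : V, arc u v h t = pos w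

/-- A graph is planar if it admits a plane embedding. -/
def Planar {V : Type} (G : SimpleGraph V) : Prop := Nonempty (PlaneEmbedding G)

/-- The size `|V(G)| + |E(G)|` of a graph. -/
def gsize {V : Type} (G : SimpleGraph V) : ℕ := Nat.card V + G.edgeSet.ncard

/-- A minimum counterexample to "every planar graph with maximum degree at most 6 has
2-distance chromatic number at most 20": a finite planar graph `G` with `Δ(G) ≤ 6` and
`χ₂(G) > 20` such that every planar graph `G'` with `Δ(G') ≤ Δ(G)` and
`|V(G')| + |E(G')| < |V(G)| + |E(G)|` satisfies `χ₂(G') ≤ 20`. -/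
def MinCounterexample {V : Type} (G : SimpleGraph V) : Prop :=
  Finite V ∧ Planar G ∧ maxDeg G ≤ 6 ∧ 20 < chi2 G ∧
    ∀ (W : Type) (G' : SimpleGraph W), Finite W → Planar G' →
      maxDeg G' ≤ maxDeg G → gsize G' < gsize G → chi2 G' ≤ 20

namespace PlaneEmbedding

variable {V : Type} {G : SimpleGraph V}

/-- The point set of the embedded graph. -/
def image (E : PlaneEmbedding G) : Set (ℝ × ℝ) :=
  Set.range E.pos ∪ ⋃ (u : V) (v : V) (h : G.Adj u v), Set.range (E.arc u v h)

/-- A face of the embedding: a connected component of the complement of the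
embedded graph. -/
def IsFace (E : PlaneEmbedding G) (F : Set (ℝ × ℝ)) : Prop :=
  ∃ x : ℝ × ℝ, x ∉ E.image ∧ F = connectedComponentIn (E.image)ᶜ x

/-- The edges on the boundary of a face. -/
def boundaryEdges (E : PlaneEmbedding G) (F : Set (ℝ × ℝ)) : Set (Sym2 V) :=
  {e | ∃ (u v : V) (h : G.Adj u v), e = s(u, v) ∧ Set.range (E.arc u v h) ⊆ closure F}

/-- The degree of a face: the number of edges in its boundary. -/
def faceDeg (E : PlaneEmbedding G) (F : Set (ℝ × ℝ)) : ℕ := (E.boundaryEdges F).ncard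

/-- A vertex is incident with a face if it lies on its boundary. -/
def VertexOnFace (E : PlaneEmbedding G) (v : V) (F : Set (ℝ × ℝ)) : Prop :=
  E.pos v ∈ closure F

/-- `m_k(v)`: the number of `k`-faces incident with `v`. -/
def mFace (E : PlaneEmbedding G) (k : ℕ) (v : V) : ℕ :=
  {F : Set (ℝ × ℝ) | E.IsFace F ∧ E.faceDeg F = k ∧ E.VertexOnFace v F}.ncard

/-- `m_{k⁺}(v)`: the number of faces of degree at least `k` incident with `v`. -/
def mFaceGe (E : PlaneEmbedding G) (k : ℕ) (v : V) : ℕ :=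
  {F : Set (ℝ × ℝ) | E.IsFace F ∧ k ≤ E.faceDeg F ∧ E.VertexOnFace v F}.ncard

end PlaneEmbedding

end TwoDistance

open TwoDistance TwoDistance.PlaneEmbedding

section Helpers

variable {V : Type}

lemma chain_of_walk {G : SimpleGraph V} {a b : V} (p : G.Walk a b) (hp : p.length ≤ 2) :
    a = b ∨ G.Adj a b ∨ ∃ c, G.Adj a c ∧ G.Adj c b := by
  cases p with
  | nil => left; rfl
  | cons h q =>
    cases q with
    | nil => right; left; exact h
    | @cons _ c _ h' q' =>
      cases q' with
      | nil => right; right; exact ⟨_, h, h'⟩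
      | cons h'' q'' => simp [SimpleGraph.Walk.length_cons] at hp

lemma isTwoDist_iff (G : SimpleGraph V) {k : ℕ} (φ : V → Fin k) :
    IsTwoDistColoring G φ ↔
      ∀ u v, u ≠ v → (G.Adj u v ∨ ∃ c, G.Adj u c ∧ G.Adj c v) → φ u ≠ φ v := by
  constructor
  · intro h u v huv hc
    apply h u v huv
    rcases hc with h1 | ⟨c, h1, h2⟩
    · exact ⟨h1.toWalk, by simp [SimpleGraph.Adj.toWalk]⟩
    · exact ⟨SimpleGraph.Walk.cons h1 h2.toWalk, by simp [SimpleGraph.Adj.toWalk]⟩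
  · rintro h u v huv ⟨p, hp⟩
    rcases chain_of_walk p hp with rfl | hc
    · exact absurd rfl huv
    · exact h u v huv hc

lemma exists_coloring20 [Finite V] (G : SimpleGraph V) (h : chi2 G ≤ 20) :
    ∃ φ : V → Fin 20, IsTwoDistColoring G φ := by
  have hne : {k : ℕ | ∃ φ : V → Fin k, IsTwoDistColoring G φ}.Nonempty := by
    obtain ⟨n, ⟨e⟩⟩ := Finite.exists_equiv_fin V
    exact ⟨n, e, fun u v huv _ => fun hc => huv (e.injective hc)⟩
  have hmem := Nat.sInf_mem hne
  obtain ⟨φ0, hφ0⟩ := hmem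
  have hle : chi2 G ≤ 20 := h
  refine ⟨Fin.castLE hle ∘ φ0, ?_⟩
  intro u v huv hw
  exact fun hc => hφ0 u v huv hw (Fin.castLE_injective hle hc)

lemma vdeg_le_maxDeg [Finite V] (G : SimpleGraph V) (x : V) : vdeg G x ≤ maxDeg G :=
  le_csSup (Set.Finite.bddAbove (Set.finite_range _)) ⟨x, rfl⟩

lemma maxDeg_le_of {W : Type} [Finite V] {G : SimpleGraph V} {G' : SimpleGraph W}
    (h : ∀ x, ∃ y, vdeg G' x ≤ vdeg G y) : maxDeg G' ≤ maxDeg G := by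
  unfold maxDeg
  rcases isEmpty_or_nonempty W with hW | hW
  · rw [Set.range_eq_empty (vdeg G')]
    simp
  · apply csSup_le (Set.range_nonempty _)
    rintro n ⟨x, rfl⟩
    obtain ⟨y, hy⟩ := h x
    exact hy.trans (vdeg_le_maxDeg G y)

lemma ncard_subtype_le [Finite V] {v : V} (p : {x : V // x ≠ v} → Prop) (S : Set V)
    (h : ∀ y, p y → y.1 ∈ S) : {y | p y}.ncard ≤ S.ncard := by
  have h1 : {y | p y}.ncard = (Subtype.val '' {y | p y}).ncard :=
    (Set.ncard_image_of_injective _ Subtype.val_injective).symm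
  rw [h1]
  exact Set.ncard_le_ncard (by rintro z ⟨y, hy, rfl⟩; exact h y hy) (Set.toFinite S)

lemma edge_ncard_le [Finite V] {v : V} (G' : SimpleGraph {x : V // x ≠ v}) (T : Set (Sym2 V))
    (h : ∀ x y : {x : V // x ≠ v}, G'.Adj x y → s(x.1, y.1) ∈ T) :
    (G'.edgeSet).ncard ≤ T.ncard := by
  have h1 : (G'.edgeSet).ncard = (Sym2.map Subtype.val '' G'.edgeSet).ncard :=
    (Set.ncard_image_of_injective _ (Sym2.map.injective Subtype.val_injective)).symm
  rw [h1]
  refine Set.ncard_le_ncard ?_ (Set.toFinite T)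
  rintro e ⟨e', he', rfl⟩
  induction e' with
  | _ x y => rw [Sym2.map_pair_eq]; exact h x y he'

lemma pair_cover {G : SimpleGraph V} [Finite V] {v u w : V} (hdeg : vdeg G v ≤ 2)
    (hu : G.Adj v u) (hw : G.Adj v w) (huw : u ≠ w) {x y : V} (hx : G.Adj v x)
    (hy : G.Adj v y) (hxy : x ≠ y) : s(x, y) = s(u, w) := by
  have key : ∀ z, G.Adj v z → z ∈ ({u, w} : Set V) := by
    intro z hz
    by_contra hzm
    have hsub : ({z, u, w} : Set V) ⊆ {a | G.Adj v a} := by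
      rintro a (rfl | rfl | rfl) <;> assumption
    have hzu : z ≠ u := fun h => hzm (by simp [h])
    have hzw : z ≠ w := fun h => hzm (by simp [h])
    have h3 : ({z, u, w} : Set V).ncard = 3 := by
      rw [Set.ncard_insert_of_notMem (by simp [hzu, hzw]) (Set.toFinite _),
        Set.ncard_pair huw]
    have := Set.ncard_le_ncard hsub (Set.toFinite _)
    rw [h3] at this
    exact absurd (this.trans hdeg) (by norm_num)
  have hxm := key x hx
  have hym := key y hy
  rcases hxm with rfl | rfl <;> rcases hym with rfl | rfl
  · exact absurd rfl hxy
  · rfl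
  · exact Sym2.eq_swap
  · exact absurd rfl hxy

end Helpers
section Induce

variable {V : Type} {G : SimpleGraph V}

/-- Restriction of a plane embedding to a subgraph on the vertices `≠ v`. -/
def induceEmbedding (E : PlaneEmbedding G) (v : V) (G' : SimpleGraph {x : V // x ≠ v})
    (hle : ∀ x y : {x : V // x ≠ v}, G'.Adj x y → G.Adj x.1 y.1) : PlaneEmbedding G' where
  pos x := E.pos x.1
  pos_inj := fun a b h => Subtype.ext (E.pos_inj h)
  arc x y h := E.arc x.1 y.1 (hle x y h)
  arc_symm x y h := E.arc_symm x.1 y.1 (hle x y h)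
  arc_inj x y h := E.arc_inj x.1 y.1 (hle x y h)
  arc_vertex x y h t w hw := by
    rcases E.arc_vertex x.1 y.1 (hle x y h) t w.1 hw with h1 | h1
    · exact Or.inl (Subtype.ext h1)
    · exact Or.inr (Subtype.ext h1)
  arc_meet x y x' y' h h' t t' hne heq := by
    have hne' : s(x.1, y.1) ≠ s(x'.1, y'.1) := by
      intro hctr
      apply hne
      rw [Sym2.eq_iff] at hctr ⊢
      rcases hctr with ⟨h1, h2⟩ | ⟨h1, h2⟩
      · exact Or.inl ⟨Subtype.ext h1, Subtype.ext h2⟩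
      · exact Or.inr ⟨Subtype.ext h1, Subtype.ext h2⟩
    obtain ⟨z, hz⟩ := E.arc_meet x.1 y.1 x'.1 y'.1 (hle x y h) (hle x' y' h') t t' hne' heq
    have hzv : z ≠ v := by
      rcases E.arc_vertex x.1 y.1 (hle x y h) t z hz with rfl | rfl
      · exact x.2
      · exact y.2
    exact ⟨⟨z, hzv⟩, hz⟩

/-- Extend a 20-coloring of a reduced graph `G'` (on the vertices other than `v`)
to a 20-coloring of `G`. -/
lemma ext_coloring [Finite V] (v : V)
    (Hcov : ∃ u w : V, {x | G.Adj v x} ⊆ {u, w})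
    (hmax : ∀ y : V, vdeg G y ≤ 6)
    {G' : SimpleGraph {x : V // x ≠ v}}
    (H1 : ∀ x y : {x : V // x ≠ v}, G.Adj x.1 y.1 → G'.Adj x y)
    (H2 : ∀ x y : {x : V // x ≠ v}, x ≠ y → G.Adj x.1 v → G.Adj v y.1 →
      (G'.Adj x y ∨ ∃ m, G'.Adj x m ∧ G'.Adj m y))
    (φ' : {x : V // x ≠ v} → Fin 20) (hφ' : IsTwoDistColoring G' φ') :
    ∃ φ : V → Fin 20, IsTwoDistColoring G φ := by
  classical
  obtain ⟨u, w, hcov⟩ := Hcov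
  -- the set of vertices at distance ≤ 2 from v
  set D : Set V := {x | G.Adj v x ∨ ∃ m, G.Adj v m ∧ G.Adj m x} with hD
  have hDsub : D ⊆ {u, w} ∪ ({x | G.Adj u x} ∪ {x | G.Adj w x}) := by
    rintro x (hx | ⟨m, hm1, hm2⟩)
    · exact Or.inl (hcov hx)
    · rcases hcov hm1 with rfl | rfl
      · exact Or.inr (Or.inl hm2)
      · exact Or.inr (Or.inr hm2)
  have hDcard : D.ncard ≤ 14 := by
    have h1 := Set.ncard_le_ncard hDsub (Set.toFinite _)
    have h2 := Set.ncard_union_le ({u, w} : Set V) ({x | G.Adj u x} ∪ {x | G.Adj w x})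
    have h3 := Set.ncard_union_le ({x | G.Adj u x}) ({x | G.Adj w x})
    have h4 : ({u, w} : Set V).ncard ≤ 2 := by
      apply (Set.ncard_insert_le _ _).trans
      simp
    have h5 := hmax u
    have h6 := hmax w
    unfold vdeg at h5 h6
    omega
  -- colors used near v
  set C : Set (Fin 20) := φ' '' {x : {x : V // x ≠ v} | x.1 ∈ D} with hC
  have hCcard : C.ncard ≤ 14 := by
    refine le_trans (Set.ncard_image_le (Set.toFinite _)) (le_trans ?_ hDcard)
    exact ncard_subtype_le _ D (fun y hy => hy)
  have hfree : ∃ c : Fin 20, c ∉ C := by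
    by_contra hctr
    push_neg at hctr
    have huniv : (Set.univ : Set (Fin 20)) ⊆ C := fun c _ => hctr c
    have := Set.ncard_le_ncard huniv (Set.toFinite _)
    rw [Set.ncard_univ] at this
    simp [Nat.card_eq_fintype_card] at this
    omega
  obtain ⟨c, hc⟩ := hfree
  refine ⟨fun x => if h : x = v then c else φ' ⟨x, h⟩, ?_⟩
  rw [isTwoDist_iff]
  intro x y hxy hchain
  -- helper: a chain from v lands in D
  have hmemD : ∀ z, (G.Adj v z ∨ ∃ m, G.Adj v m ∧ G.Adj m z) → z ∈ D := fun z hz => hz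
  by_cases hxv : x = v
  · have hyv : y ≠ v := fun h => hxy (hxv.trans h.symm)
    have hyD : y ∈ D := hmemD y (hxv ▸ hchain)
    simp only [dif_pos hxv, dif_neg hyv]
    intro hcc
    exact hc ⟨⟨y, hyv⟩, hyD, hcc.symm⟩
  · by_cases hyv : y = v
    · have hxD : x ∈ D := by
        apply hmemD x
        rcases hchain with h1 | ⟨m, h1, h2⟩
        · exact Or.inl (hyv ▸ h1).symm
        · exact Or.inr ⟨m, (hyv ▸ h2).symm, h1.symm⟩
      simp only [dif_neg hxv, dif_pos hyv]
      intro hcc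
      exact hc ⟨⟨x, hxv⟩, hxD, hcc⟩
    · simp only [dif_neg hxv, dif_neg hyv]
      have hne' : (⟨x, hxv⟩ : {a : V // a ≠ v}) ≠ ⟨y, hyv⟩ :=
        fun h => hxy (congrArg Subtype.val h)
      apply (isTwoDist_iff G' φ').mp hφ' _ _ hne'
      rcases hchain with h1 | ⟨m, h1, h2⟩
      · exact Or.inl (H1 _ _ h1)
      · by_cases hmv : m = v
        · subst hmv
          exact H2 ⟨x, hxv⟩ ⟨y, hyv⟩ hne' h1 h2
        · exact Or.inr ⟨⟨m, hmv⟩, H1 _ _ h1, H1 _ _ h2⟩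

end Induce
section Step

variable {V : Type}

lemma nbr_mem_pair {G : SimpleGraph V} [Finite V] {v u w : V} (hdeg : vdeg G v ≤ 2)
    (hu : G.Adj v u) (hw : G.Adj v w) (huw : u ≠ w) {z : V} (hz : G.Adj v z) :
    z ∈ ({u, w} : Set V) := by
  by_contra hzm
  have hsub : ({z, u, w} : Set V) ⊆ {a | G.Adj v a} := by
    rintro a (rfl | rfl | rfl) <;> assumption
  have hzu : z ≠ u := fun h => hzm (by simp [h])
  have hzw : z ≠ w := fun h => hzm (by simp [h])
  have h3 : ({z, u, w} : Set V).ncard = 3 := by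
    rw [Set.ncard_insert_of_notMem (by simp [hzu, hzw]) (Set.toFinite _),
      Set.ncard_pair huw]
  have := Set.ncard_le_ncard hsub (Set.toFinite _)
  rw [h3] at this
  exact absurd (this.trans hdeg) (by norm_num)

lemma pair_cover' {G : SimpleGraph V} [Finite V] {v u w : V} (hdeg : vdeg G v ≤ 2)
    (hu : G.Adj v u) (hw : G.Adj v w) (huw : u ≠ w) {x y : V} (hx : G.Adj v x)
    (hy : G.Adj v y) (hxy : x ≠ y) : s(x, y) = s(u, w) := by
  rcases nbr_mem_pair hdeg hu hw huw hx with rfl | rfl <;>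
    rcases nbr_mem_pair hdeg hu hw huw hy with rfl | rfl
  · exact absurd rfl hxy
  · rfl
  · exact Sym2.eq_swap
  · exact absurd rfl hxy

/-- The key reduction step: from a suitable reduced graph `G'` we derive a
contradiction with `G` being a minimum counterexample. -/
lemma step [Finite V] {G : SimpleGraph V} (hG : MinCounterexample G) (v : V)
    (Hcov : ∃ u w : V, {x | G.Adj v x} ⊆ {u, w})
    (G' : SimpleGraph {x : V // x ≠ v}) (E' : PlaneEmbedding G')
    (hvd : ∀ x, ∃ y, vdeg G' x ≤ vdeg G y)
    (hedge : G'.edgeSet.ncard ≤ G.edgeSet.ncard)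
    (H1 : ∀ x y : {x : V // x ≠ v}, G.Adj x.1 y.1 → G'.Adj x y)
    (H2 : ∀ x y : {x : V // x ≠ v}, x ≠ y → G.Adj x.1 v → G.Adj v y.1 →
      (G'.Adj x y ∨ ∃ m, G'.Adj x m ∧ G'.Adj m y)) : False := by
  obtain ⟨hfin, hpl, hmax, hchi, hmin⟩ := hG
  have hmax6 : ∀ y, vdeg G y ≤ 6 := fun y => (vdeg_le_maxDeg G y).trans hmax
  have hNe : Nonempty V := ⟨v⟩
  have hsize : gsize G' < gsize G := by
    unfold gsize
    have hcV : Nat.card {x : V // x ≠ v} = Nat.card V - 1 := by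
      haveI := Classical.decEq V
      haveI := Fintype.ofFinite V
      rw [Nat.card_eq_fintype_card, Nat.card_eq_fintype_card]
      have : Fintype.card {x : V // x ≠ v} = Fintype.card {x : V // ¬ x = v} := rfl
      rw [this, Fintype.card_subtype_compl, Fintype.card_subtype_eq]
    have hpos : 0 < Nat.card V := Nat.card_pos
    omega
  have h20 := hmin _ G' inferInstance ⟨E'⟩ (maxDeg_le_of hvd) hsize
  obtain ⟨φ', hφ'⟩ := exists_coloring20 G' h20
  obtain ⟨φ, hφ⟩ := ext_coloring v Hcov hmax6 H1 H2 φ' hφ'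
  have : chi2 G ≤ 20 := Nat.sInf_le ⟨φ, hφ⟩
  omega

/-- The reduced graph: delete `v`, add the edge `uw`. -/
def addEdgeGraph (G : SimpleGraph V) (v u w : V) : SimpleGraph {x : V // x ≠ v} where
  Adj x y := G.Adj x.1 y.1 ∨ (s(x.1, y.1) = s(u, w) ∧ u ≠ w)
  symm := by
    refine ⟨?_⟩
    rintro x y (h | ⟨h, hn⟩)
    · exact Or.inl h.symm
    · exact Or.inr ⟨by rw [Sym2.eq_swap]; exact h, hn⟩
  loopless := by
    refine ⟨?_⟩
    rintro x (h | ⟨h, hn⟩)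
    · exact G.loopless.irrefl x.1 h
    · rcases Sym2.eq_iff.mp h with ⟨h1, h2⟩ | ⟨h1, h2⟩ <;> exact hn (h1 ▸ h2 ▸ rfl)

lemma addEdge_vdeg [Finite V] {G : SimpleGraph V} {v u w : V} (hu : G.Adj v u)
    (hw : G.Adj v w) (huw : u ≠ w) (x : {x : V // x ≠ v}) :
    vdeg (addEdgeGraph G v u w) x ≤ vdeg G x.1 := by
  have hvpos : ∀ z : V, G.Adj z v → 1 ≤ vdeg G z := by
    intro z hz
    have : ({v} : Set V).ncard ≤ vdeg G z :=
      Set.ncard_le_ncard (by simpa using hz) (Set.toFinite _)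
    simpa using this
  by_cases hx : x.1 = u ∨ x.1 = w
  · -- x is an endpoint of the new edge
    obtain ⟨o, ho, hne⟩ : ∃ o : V, (x.1 = u ∧ o = w ∨ x.1 = w ∧ o = u) ∧ x.1 ≠ o := by
      rcases hx with hx | hx
      · exact ⟨w, Or.inl ⟨hx, rfl⟩, by rw [hx]; exact huw⟩
      · exact ⟨u, Or.inr ⟨hx, rfl⟩, by rw [hx]; exact huw.symm⟩
    have hkey : ∀ y : {x : V // x ≠ v}, (addEdgeGraph G v u w).Adj x y →
        y.1 ∈ ({z | G.Adj x.1 z} \ {v}) ∪ {o} := by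
      rintro y (h | ⟨hs, hn⟩)
      · exact Or.inl ⟨h, by simpa using y.2⟩
      · rcases Sym2.eq_iff.mp hs with ⟨h1, h2⟩ | ⟨h1, h2⟩
        · rcases ho with ⟨_, how⟩ | ⟨hxw, _⟩
          · exact Or.inr (by rw [Set.mem_singleton_iff, h2, how])
          · exact absurd (h1.symm.trans hxw) hn
        · rcases ho with ⟨hxu, _⟩ | ⟨_, hou⟩
          · exact absurd (hxu.symm.trans h1) hn
          · exact Or.inr (by rw [Set.mem_singleton_iff, h2, hou])
    have hvadj : G.Adj x.1 v := by
      rcases ho with ⟨hxu, _⟩ | ⟨hxw, _⟩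
      · rw [hxu]; exact hu.symm
      · rw [hxw]; exact hw.symm
    have hvmem : v ∈ {z | G.Adj x.1 z} := hvadj
    have h1 : vdeg (addEdgeGraph G v u w) x ≤
        (({z | G.Adj x.1 z} \ {v}) ∪ {o}).ncard := ncard_subtype_le _ _ hkey
    have h2 := Set.ncard_union_le ({z | G.Adj x.1 z} \ {v}) ({o} : Set V)
    have h3 : (({z | G.Adj x.1 z} \ {v})).ncard = {z | G.Adj x.1 z}.ncard - 1 :=
      Set.ncard_diff_singleton_of_mem hvmem
    have h4 := hvpos x.1 hvadj
    have h5 : ({o} : Set V).ncard = 1 := Set.ncard_singleton o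
    unfold vdeg at *
    omega
  · push_neg at hx
    have hkey : ∀ y : {x : V // x ≠ v}, (addEdgeGraph G v u w).Adj x y →
        y.1 ∈ {z | G.Adj x.1 z} := by
      rintro y (h | ⟨hs, hn⟩)
      · exact h
      · rcases Sym2.eq_iff.mp hs with ⟨h1, _⟩ | ⟨h1, _⟩
        · exact absurd h1 hx.1
        · exact absurd h1 hx.2
    exact ncard_subtype_le _ _ hkey

lemma addEdge_edges [Finite V] {G : SimpleGraph V} {v u w : V} (hu : G.Adj v u) :
    (addEdgeGraph G v u w).edgeSet.ncard ≤ G.edgeSet.ncard := by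
  have h1 : (addEdgeGraph G v u w).edgeSet.ncard ≤
      ((G.edgeSet \ {s(v, u)}) ∪ {s(u, w)}).ncard := by
    apply edge_ncard_le
    rintro x y (h | ⟨hs, hn⟩)
    · left
      refine ⟨h, ?_⟩
      simp only [Set.mem_singleton_iff, Sym2.eq_iff]
      rintro (⟨h1, _⟩ | ⟨_, h2⟩)
      · exact x.2 h1
      · exact y.2 h2
    · right; simp [hs]
  have h2 := Set.ncard_union_le (G.edgeSet \ {s(v, u)}) ({s(u, w)} : Set (Sym2 V))
  have h3 : (G.edgeSet \ {s(v, u)}).ncard = G.edgeSet.ncard - 1 :=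
    Set.ncard_diff_singleton_of_mem ((G.mem_edgeSet).mpr hu)
  have h4 : 1 ≤ G.edgeSet.ncard := by
    have : ({s(v, u)} : Set (Sym2 V)).ncard ≤ G.edgeSet.ncard :=
      Set.ncard_le_ncard (by simpa using hu) (Set.toFinite _)
    simpa using this
  have h5 : ({s(u, w)} : Set (Sym2 V)).ncard = 1 := Set.ncard_singleton _
  omega

end Step
section AddEdgeEmb

variable {V : Type} {G : SimpleGraph V} (E : PlaneEmbedding G) {v u w : V}

lemma path_symm_coe {X : Type} [TopologicalSpace X] {a b : X} (γ : Path a b) :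
    ⇑γ.symm = ⇑γ ∘ unitInterval.symm := funext fun t => Path.symm_apply γ t

lemma sigma_inj : Function.Injective unitInterval.symm := fun a b hab => by
  rw [← unitInterval.symm_symm a, hab, unitInterval.symm_symm]

/-- The concatenated arc from `u` through `v` to `w`. -/
def pathP (hu : G.Adj v u) (hw : G.Adj v w) : Path (E.pos u) (E.pos w) :=
  (E.arc u v hu.symm).trans (E.arc v w hw)

lemma sym2_uv_ne_vw (hu : G.Adj v u) (hw : G.Adj v w) (huw : u ≠ w) :
    s(u, v) ≠ s(v, w) := by
  intro hctr
  rcases Sym2.eq_iff.mp hctr with ⟨h1, h2⟩ | ⟨h1, h2⟩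
  · exact hu.ne h1.symm
  · exact huw h1

lemma pathP_vertex (hu : G.Adj v u) (hw : G.Adj v w) (t : unitInterval) (z : V)
    (hz : pathP E hu hw t = E.pos z) : z = u ∨ z = v ∨ z = w := by
  have hmem : pathP E hu hw t ∈ Set.range ⇑(pathP E hu hw) := ⟨t, rfl⟩
  rw [pathP, Path.trans_range] at hmem
  rcases hmem with ⟨t1, ht1⟩ | ⟨t2, ht2⟩
  · rcases E.arc_vertex u v hu.symm t1 z (ht1.trans hz) with h | h
    · exact Or.inl h
    · exact Or.inr (Or.inl h)
  · rcases E.arc_vertex v w hw t2 z (ht2.trans hz) with h | h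
    · exact Or.inr (Or.inl h)
    · exact Or.inr (Or.inr h)

lemma pathP_meet (hu : G.Adj v u) (hw : G.Adj v w) {x y : V} (hxy : G.Adj x y)
    (hxv : x ≠ v) (hyv : y ≠ v) (t t' : unitInterval)
    (heq : E.arc x y hxy t = pathP E hu hw t') :
    ∃ z : V, E.arc x y hxy t = E.pos z := by
  have hne1 : s(x, y) ≠ s(u, v) := by
    intro hctr
    rcases Sym2.eq_iff.mp hctr with ⟨h1, h2⟩ | ⟨h1, h2⟩
    · exact hyv h2
    · exact hxv h1
  have hne2 : s(x, y) ≠ s(v, w) := by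
    intro hctr
    rcases Sym2.eq_iff.mp hctr with ⟨h1, h2⟩ | ⟨h1, h2⟩
    · exact hxv h1
    · exact hyv h2
  have hmem : pathP E hu hw t' ∈ Set.range ⇑(pathP E hu hw) := ⟨t', rfl⟩
  rw [pathP, Path.trans_range] at hmem
  rcases hmem with ⟨t1, ht1⟩ | ⟨t2, ht2⟩
  · exact E.arc_meet x y u v hxy hu.symm t t1 hne1 (heq.trans ht1.symm)
  · exact E.arc_meet x y v w hxy hw t t2 hne2 (heq.trans ht2.symm)

lemma pathP_inj (hu : G.Adj v u) (hw : G.Adj v w) (huw : u ≠ w) :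
    Function.Injective ⇑(pathP E hu hw) := by
  intro a b hab
  rw [pathP, Path.trans_apply, Path.trans_apply] at hab
  split_ifs at hab with ha hb hb
  · refine Subtype.ext ?_
    have h2 : (2:ℝ) * a = 2 * b := congrArg Subtype.val (E.arc_inj u v hu.symm hab)
    linarith
  · exfalso
    obtain ⟨z, hz⟩ := E.arc_meet u v v w hu.symm hw _ _ (sym2_uv_ne_vw hu hw huw) hab
    have h2' := E.arc_vertex v w hw _ z (hab.symm.trans hz)
    rcases E.arc_vertex u v hu.symm _ z hz with hzu | hzv
    · rcases h2' with h | h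
      · exact hu.ne (hzu.symm.trans h).symm
      · exact huw (hzu.symm.trans h)
    · have h4 : (2:ℝ) * b - 1 = 0 := congrArg Subtype.val
        (E.arc_inj v w hw ((hab.symm.trans hz).trans
          (by rw [hzv]; exact (Path.source _).symm)))
      push_neg at hb
      linarith
  · exfalso
    obtain ⟨z, hz⟩ := E.arc_meet v w u v hw hu.symm _ _ (sym2_uv_ne_vw hu hw huw).symm hab
    have h2' := E.arc_vertex u v hu.symm _ z (hab.symm.trans hz)
    rcases E.arc_vertex v w hw _ z hz with hzv | hzw
    · have h4 : (2:ℝ) * a - 1 = 0 := congrArg Subtype.val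
        (E.arc_inj v w hw (hz.trans (by rw [hzv]; exact (Path.source _).symm)))
      push_neg at ha
      linarith
    · rcases h2' with h | h
      · exact huw (h.symm.trans hzw)
      · exact hw.ne (h.symm.trans hzw)
  · refine Subtype.ext ?_
    have h2 : (2:ℝ) * a - 1 = 2 * b - 1 := congrArg Subtype.val (E.arc_inj v w hw hab)
    linarith

open scoped Classical

/-- The arc assignment for the reduced graph with the added edge. -/
def newArc (hu : G.Adj v u) (hw : G.Adj v w) (huw : u ≠ w)
    (x y : {a : V // a ≠ v}) (h : (addEdgeGraph G v u w).Adj x y) :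
    Path (E.pos x.1) (E.pos y.1) :=
  if hxy : G.Adj x.1 y.1 then E.arc x.1 y.1 hxy
  else if hx1 : x.1 = u then
    (pathP E hu hw).cast (congrArg E.pos hx1) (congrArg E.pos (by
      rcases Sym2.eq_iff.mp (h.resolve_left hxy).1 with ⟨h1, h2⟩ | ⟨h1, h2⟩
      · exact h2
      · exact absurd (hx1.symm.trans h1) huw))
  else
    (pathP E hu hw).symm.cast
      (congrArg E.pos (by
        rcases Sym2.eq_iff.mp (h.resolve_left hxy).1 with ⟨h1, h2⟩ | ⟨h1, h2⟩
        · exact absurd h1 hx1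
        · exact h1))
      (congrArg E.pos (by
        rcases Sym2.eq_iff.mp (h.resolve_left hxy).1 with ⟨h1, h2⟩ | ⟨h1, h2⟩
        · exact absurd h1 hx1
        · exact h2))

lemma newArc_spec (hu : G.Adj v u) (hw : G.Adj v w) (huw : u ≠ w)
    (x y : {a : V // a ≠ v}) (h : (addEdgeGraph G v u w).Adj x y) :
    (∃ hxy : G.Adj x.1 y.1, newArc E hu hw huw x y h = E.arc x.1 y.1 hxy) ∨
    (¬ G.Adj x.1 y.1 ∧ x.1 = u ∧ y.1 = w ∧
      ⇑(newArc E hu hw huw x y h) = ⇑(pathP E hu hw)) ∨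
    (¬ G.Adj x.1 y.1 ∧ x.1 = w ∧ y.1 = u ∧
      ⇑(newArc E hu hw huw x y h) = ⇑(pathP E hu hw).symm) := by
  unfold newArc
  split_ifs with h1 h2
  · exact Or.inl ⟨h1, rfl⟩
  · refine Or.inr (Or.inl ⟨h1, h2, ?_, Path.cast_coe _ _ _⟩)
    rcases Sym2.eq_iff.mp (h.resolve_left h1).1 with ⟨h3, h4⟩ | ⟨h3, h4⟩
    · exact h4
    · exact absurd (h2.symm.trans h3) huw
  · refine Or.inr (Or.inr ⟨h1, ?_, ?_, Path.cast_coe _ _ _⟩)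
    · rcases Sym2.eq_iff.mp (h.resolve_left h1).1 with ⟨h3, h4⟩ | ⟨h3, h4⟩
      · exact absurd h3 h2
      · exact h3
    · rcases Sym2.eq_iff.mp (h.resolve_left h1).1 with ⟨h3, h4⟩ | ⟨h3, h4⟩
      · exact absurd h3 h2
      · exact h4

/-- Plane embedding of the reduced graph with the added edge. -/
def addEdgeEmbedding (hu : G.Adj v u) (hw : G.Adj v w) (huw : u ≠ w)
    (hnadj : ¬ G.Adj u w) : PlaneEmbedding (addEdgeGraph G v u w) where
  pos x := E.pos x.1
  pos_inj a b hh := Subtype.ext (E.pos_inj hh)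
  arc := newArc E hu hw huw
  arc_symm x y h := by
    apply Path.ext
    rcases newArc_spec E hu hw huw x y h with ⟨hxy, e⟩ | ⟨hn, hx1, hy1, e⟩ |
        ⟨hn, hx1, hy1, e⟩ <;>
      rcases newArc_spec E hu hw huw y x h.symm with ⟨hxy', e'⟩ | ⟨hn', hx1', hy1', e'⟩ |
        ⟨hn', hx1', hy1', e'⟩
    · rw [e', e]
      exact congrArg _ (E.arc_symm x.1 y.1 hxy)
    · exact absurd hxy.symm hn'
    · exact absurd hxy.symm hn'
    · exact absurd hxy'.symm hn
    · exact absurd (hx1'.symm.trans hy1) huw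
    · rw [e', path_symm_coe, path_symm_coe, e]
    · exact absurd hxy'.symm hn
    · rw [e']
      funext t
      rw [Path.symm_apply]
      simp only [Function.comp_apply]
      rw [e, Path.symm_apply]
      simp only [Function.comp_apply, unitInterval.symm_symm]
    · exact absurd (hy1'.symm.trans hx1) huw
  arc_inj x y h := by
    rcases newArc_spec E hu hw huw x y h with ⟨hxy, e⟩ | ⟨_, _, _, e⟩ | ⟨_, _, _, e⟩
    · rw [e]; exact E.arc_inj x.1 y.1 hxy
    · rw [e]; exact pathP_inj E hu hw huw
    · rw [e, path_symm_coe]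
      exact (pathP_inj E hu hw huw).comp sigma_inj
  arc_vertex x y h t z hz := by
    rcases newArc_spec E hu hw huw x y h with ⟨hxy, e⟩ | ⟨_, hx1, hy1, e⟩ | ⟨_, hx1, hy1, e⟩
    · rw [e] at hz
      rcases E.arc_vertex x.1 y.1 hxy t z.1 hz with h1 | h1
      · exact Or.inl (Subtype.ext h1)
      · exact Or.inr (Subtype.ext h1)
    · rw [e] at hz
      rcases pathP_vertex E hu hw t z.1 hz with h1 | h1 | h1
      · exact Or.inl (Subtype.ext (h1.trans hx1.symm))
      · exact absurd h1 z.2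
      · exact Or.inr (Subtype.ext (h1.trans hy1.symm))
    · rw [e, path_symm_coe] at hz
      rcases pathP_vertex E hu hw _ z.1 hz with h1 | h1 | h1
      · exact Or.inr (Subtype.ext (h1.trans hy1.symm))
      · exact absurd h1 z.2
      · exact Or.inl (Subtype.ext (h1.trans hx1.symm))
  arc_meet x y x' y' h h' t t' hne heq := by
    have hne1 : s(x.1, y.1) ≠ s(x'.1, y'.1) := by
      intro hctr
      apply hne
      rcases Sym2.eq_iff.mp hctr with ⟨h1, h2⟩ | ⟨h1, h2⟩
      · rw [Sym2.eq_iff]; exact Or.inl ⟨Subtype.ext h1, Subtype.ext h2⟩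
      · rw [Sym2.eq_iff]; exact Or.inr ⟨Subtype.ext h1, Subtype.ext h2⟩
    rcases newArc_spec E hu hw huw x y h with ⟨hxy, e⟩ | ⟨_, hx1, hy1, e⟩ | ⟨_, hx1, hy1, e⟩ <;>
      rcases newArc_spec E hu hw huw x' y' h' with ⟨hxy', e'⟩ | ⟨_, hx1', hy1', e'⟩ |
        ⟨_, hx1', hy1', e'⟩
    · -- both original arcs
      rw [e, e'] at heq
      obtain ⟨z, hz⟩ := E.arc_meet x.1 y.1 x'.1 y'.1 hxy hxy' t t' hne1 heq
      have hzv : z ≠ v := by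
        rcases E.arc_vertex x.1 y.1 hxy t z hz with h3 | h3
        · exact h3 ▸ x.2
        · exact h3 ▸ y.2
      exact ⟨⟨z, hzv⟩, by rw [e]; exact hz⟩
    · -- original vs new
      rw [e, e'] at heq
      obtain ⟨z, hz⟩ := pathP_meet E hu hw hxy x.2 y.2 t t' heq
      have hzv : z ≠ v := by
        rcases E.arc_vertex x.1 y.1 hxy t z hz with h3 | h3
        · exact h3 ▸ x.2
        · exact h3 ▸ y.2
      exact ⟨⟨z, hzv⟩, by rw [e]; exact hz⟩
    · rw [e, e', path_symm_coe] at heq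
      obtain ⟨z, hz⟩ := pathP_meet E hu hw hxy x.2 y.2 t _ heq
      have hzv : z ≠ v := by
        rcases E.arc_vertex x.1 y.1 hxy t z hz with h3 | h3
        · exact h3 ▸ x.2
        · exact h3 ▸ y.2
      exact ⟨⟨z, hzv⟩, by rw [e]; exact hz⟩
    · -- new vs original
      rw [e, e'] at heq
      obtain ⟨z, hz⟩ := pathP_meet E hu hw hxy' x'.2 y'.2 t' t heq.symm
      have hzv : z ≠ v := by
        rcases E.arc_vertex x'.1 y'.1 hxy' t' z hz with h3 | h3
        · exact h3 ▸ x'.2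
        · exact h3 ▸ y'.2
      exact ⟨⟨z, hzv⟩, by rw [e]; exact heq.trans hz⟩
    · -- new vs new: contradiction
      exact absurd (show s(x.1, y.1) = s(x'.1, y'.1) by
        rw [hx1, hy1, hx1', hy1']) hne1
    · exact absurd (show s(x.1, y.1) = s(x'.1, y'.1) by
        rw [hx1, hy1, hx1', hy1', Sym2.eq_swap]) hne1
    · rw [e, e', path_symm_coe] at heq
      obtain ⟨z, hz⟩ := pathP_meet E hu hw hxy' x'.2 y'.2 t' _ heq.symm
      have hzv : z ≠ v := by
        rcases E.arc_vertex x'.1 y'.1 hxy' t' z hz with h3 | h3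
        · exact h3 ▸ x'.2
        · exact h3 ▸ y'.2
      exact ⟨⟨z, hzv⟩, by rw [e, path_symm_coe]; exact heq.trans hz⟩
    · exact absurd (show s(x.1, y.1) = s(x'.1, y'.1) by
        rw [hx1, hy1, hx1', hy1', Sym2.eq_swap]) hne1
    · exact absurd (show s(x.1, y.1) = s(x'.1, y'.1) by
        rw [hx1, hy1, hx1', hy1']) hne1

end AddEdgeEmb
/-- A minimum counterexample has minimum degree at least 3. -/
theorem minDeg_ge_three {V : Type} (G : SimpleGraph V)
    (hG : MinCounterexample G) :
    3 ≤ minDeg G := by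
  haveI : Finite V := hG.1
  by_contra hlt
  push_neg at hlt
  rcases isEmpty_or_nonempty V with hV | hV
  · have h0 : (0 : ℕ) ∈ {k : ℕ | ∃ φ : V → Fin k, IsTwoDistColoring G φ} :=
      ⟨fun x => isEmptyElim x, fun u => isEmptyElim u⟩
    have h1 : chi2 G ≤ 0 := Nat.sInf_le h0
    have h2 := hG.2.2.2.1
    omega
  · obtain ⟨v, hv⟩ := Nat.sInf_mem (Set.range_nonempty (vdeg G))
    have hlt' : sInf (Set.range (vdeg G)) < 3 := hlt
    have hdeg : vdeg G v ≤ 2 := by omega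
    obtain ⟨E⟩ := hG.2.1
    by_cases hex : ∃ u w : V, G.Adj v u ∧ G.Adj v w ∧ u ≠ w
    · obtain ⟨u, w, hu, hw, huw⟩ := hex
      have Hcov : ∃ a b : V, {x | G.Adj v x} ⊆ {a, b} :=
        ⟨u, w, fun z hz => nbr_mem_pair hdeg hu hw huw hz⟩
      by_cases haduw : G.Adj u w
      · -- `u` and `w` already adjacent: just delete `v`
        set G' := G.comap (Subtype.val : {x : V // x ≠ v} → V) with hG'
        have H1 : ∀ x y : {x : V // x ≠ v}, G.Adj x.1 y.1 → G'.Adj x y := fun _ _ h => h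
        have H2 : ∀ x y : {x : V // x ≠ v}, x ≠ y → G.Adj x.1 v → G.Adj v y.1 →
            (G'.Adj x y ∨ ∃ m, G'.Adj x m ∧ G'.Adj m y) := by
          intro x y hxy hxv hvy
          left
          have hs := pair_cover' hdeg hu hw huw hxv.symm hvy
            (fun h => hxy (Subtype.ext h))
          show G.Adj x.1 y.1
          rcases Sym2.eq_iff.mp hs with ⟨h1, h2⟩ | ⟨h1, h2⟩
          · rw [h1, h2]; exact haduw
          · rw [h1, h2]; exact haduw.symm
        refine step hG v Hcov G' (induceEmbedding E v G' fun _ _ h => h) ?_ ?_ H1 H2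
        · exact fun x => ⟨x.1, ncard_subtype_le _ _ (fun y hy => hy)⟩
        · exact edge_ncard_le G' G.edgeSet (fun x y h => (G.mem_edgeSet).mpr h)
      · -- delete `v` and add the edge `uw`
        refine step hG v Hcov (addEdgeGraph G v u w)
          (addEdgeEmbedding E hu hw huw haduw) ?_ ?_ ?_ ?_
        · exact fun x => ⟨x.1, addEdge_vdeg hu hw huw x⟩
        · exact addEdge_edges hu
        · exact fun x y h => Or.inl h
        · intro x y hxy hxv hvy
          exact Or.inl (Or.inr ⟨pair_cover' hdeg hu hw huw hxv.symm hvy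
            (fun h => hxy (Subtype.ext h)), huw⟩)
    · -- `v` has at most one neighbour: just delete `v`
      push_neg at hex
      have Hcov : ∃ a b : V, {x | G.Adj v x} ⊆ {a, b} := by
        by_cases hN : ∃ a, G.Adj v a
        · obtain ⟨a, ha⟩ := hN
          exact ⟨a, a, fun z hz => by simp [hex z a hz ha]⟩
        · push_neg at hN
          exact ⟨v, v, fun z hz => absurd hz (hN z)⟩
      set G' := G.comap (Subtype.val : {x : V // x ≠ v} → V) with hG'
      have H1 : ∀ x y : {x : V // x ≠ v}, G.Adj x.1 y.1 → G'.Adj x y := fun _ _ h => h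
      have H2 : ∀ x y : {x : V // x ≠ v}, x ≠ y → G.Adj x.1 v → G.Adj v y.1 →
          (G'.Adj x y ∨ ∃ m, G'.Adj x m ∧ G'.Adj m y) := by
        intro x y hxy hxv hvy
        exact absurd (Subtype.ext (hex x.1 y.1 hxv.symm hvy)) hxy
      refine step hG v Hcov G' (induceEmbedding E v G' fun _ _ h => h) ?_ ?_ H1 H2
      · exact fun x => ⟨x.1, ncard_subtype_le _ _ (fun y hy => hy)⟩
      · exact edge_ncard_le G' G.edgeSet (fun x y h => (G.mem_edgeSet).mpr h)
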